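/- Let k be a positive integer, Λ a finitely aligned k-graph with boundary-path groupoid G_Λ, and R a commutative ring with 1. Let {Z(λ_i *_s μ_i \ G_i)}_{i=1}^n be a finite collection of basic compact open bisections of G_Λ and U := ⋃_{i=1}^n Z(λ_i *_s μ_i \ G_i). Then the indicator function 1_U : G_Λ → R lies in span_R{1_{Z(λ *_s μ \ G)} : (λ,μ) ∈ Λ *_s Λ, G ⊆ s(λ)Λ finite}. -/

import Mathlib

/-- A higher-rank graph (`k`-graph): a countable small category together with a degree
functor `d` into `ℕᵏ` satisfying the unique factorisation property.  The morphisms form the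
type `Path`; the objects (vertices) are identified with the identity paths via `vertex`.
Composition `comp p q` is only meaningful when `src p = rng q`; all axioms are stated under
this compatibility assumption. -/
structure KGraph (k : ℕ) where
  Obj : Type
  Path : Type
  countable_obj : Countable Obj
  countable_path : Countable Path
  src : Path → Obj
  rng : Path → Obj
  vertex : Obj → Path
  comp : Path → Path → Path
  deg : Path → Fin k → ℕ
  src_vertex : ∀ v, src (vertex v) = v
  rng_vertex : ∀ v, rng (vertex v) = v
  deg_vertex : ∀ v, deg (vertex v) = 0
  vertex_comp : ∀ p, comp (vertex (rng p)) p = p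
  comp_vertex : ∀ p, comp p (vertex (src p)) = p
  src_comp : ∀ p q, src p = rng q → src (comp p q) = src q
  rng_comp : ∀ p q, src p = rng q → rng (comp p q) = rng p
  deg_comp : ∀ p q, src p = rng q → deg (comp p q) = deg p + deg q
  comp_assoc : ∀ p q r, src p = rng q → src q = rng r →
    comp (comp p q) r = comp p (comp q r)
  factorisation : ∀ (p : Path) (m n : Fin k → ℕ), deg p = m + n →
    ∃! x : Path × Path, src x.1 = rng x.2 ∧ deg x.1 = m ∧ deg x.2 = n ∧
      comp x.1 x.2 = p

namespace KGraph

variable {k : ℕ} (Λ : KGraph k)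

/-- `Λ^min(p,q)`: the pairs `(ρ,τ)` with `pρ = qτ` a minimal common extension of `p` and `q`. -/
def minPairs (p q : Λ.Path) : Set (Λ.Path × Λ.Path) :=
  {x | Λ.src p = Λ.rng x.1 ∧ Λ.src q = Λ.rng x.2 ∧
    Λ.comp p x.1 = Λ.comp q x.2 ∧
    Λ.deg (Λ.comp p x.1) = Λ.deg p ⊔ Λ.deg q}

/-- `MCE(p,q)`: minimal common extensions of `p` and `q`. -/
def MCE (p q : Λ.Path) : Set Λ.Path :=
  {t | Λ.deg t = Λ.deg p ⊔ Λ.deg q ∧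
    (∃ r, Λ.src p = Λ.rng r ∧ Λ.comp p r = t) ∧
    (∃ r, Λ.src q = Λ.rng r ∧ Λ.comp q r = t)}

/-- `Λ` is finitely aligned if all the sets `Λ^min(p,q)` are finite. -/
def FinitelyAligned : Prop := ∀ p q, (Λ.minPairs p q).Finite

/-- `E ⊆ vΛ` is exhaustive. -/
def Exhaustive (v : Λ.Obj) (E : Set Λ.Path) : Prop :=
  ∀ p, Λ.rng p = v → ∃ q ∈ E, (Λ.minPairs p q).Nonempty

/-- `E` is a finite exhaustive subset of `vΛ \ {v}`, i.e. an element of `FE(Λ)`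
with range vertex `v`. -/
def FE (v : Λ.Obj) (E : Set Λ.Path) : Prop :=
  E.Finite ∧ (∀ p ∈ E, Λ.rng p = v ∧ p ≠ Λ.vertex v) ∧ Λ.Exhaustive v E

/-- `Ext(p; E)`. -/
def extSet (p : Λ.Path) (E : Set Λ.Path) : Set Λ.Path :=
  ⋃ q ∈ E, {r | ∃ t, (r, t) ∈ Λ.minPairs p q}

section Family

variable {A : Type} [NonUnitalRing A]

/-- (KP1): the vertex elements are mutually orthogonal idempotents. -/
def KP1 (S : Λ.Path → A) : Prop :=
  (∀ v, S (Λ.vertex v) * S (Λ.vertex v) = S (Λ.vertex v)) ∧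
  ∀ v w, v ≠ w → S (Λ.vertex v) * S (Λ.vertex w) = 0

/-- (KP2): multiplicativity on composable paths and ghost paths.  Here `T μ` plays the
role of `S_{μ*}`. -/
def KP2 (S T : Λ.Path → A) : Prop :=
  ∀ p q, Λ.src p = Λ.rng q →
    S p * S q = S (Λ.comp p q) ∧ T q * T p = T (Λ.comp p q)

/-- (KP3): `S_{p*} S_q = ∑_{(ρ,τ) ∈ Λ^min(p,q)} S_ρ S_{τ*}` (empty sum read as `0`). -/
def KP3 (S T : Λ.Path → A) : Prop :=
  ∀ p q, T p * S q = ∑ᶠ x ∈ Λ.minPairs p q, S x.1 * T x.2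

/-- (KP4): `∏_{p ∈ E} (S_v - S_p S_{p*}) = 0` for every finite exhaustive
`E ⊆ vΛ \ {v}`.  The product is implemented as a fold over any duplicate-free list
enumerating `E`, with the harmless extra idempotent factor `S_v` in front. -/
def KP4 (S T : Λ.Path → A) : Prop :=
  ∀ (v : Λ.Obj) (l : List Λ.Path), l.Nodup → Λ.FE v {p | p ∈ l} →
    (l.map fun p => S (Λ.vertex v) - S p * T p).foldl (· * ·) (S (Λ.vertex v)) = 0

/-- A Kumjian–Pask `Λ`-family in a (not necessarily unital) ring: `S p` represents `s_p`
and `T p` represents the ghost element `s_{p*}`, with `T` and `S` agreeing on vertices. -/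
def IsKPFamily (S T : Λ.Path → A) : Prop :=
  (∀ v, T (Λ.vertex v) = S (Λ.vertex v)) ∧
  Λ.KP1 S ∧ Λ.KP2 S T ∧ Λ.KP3 S T ∧ Λ.KP4 S T

end Family

/-- `(B, s, t)` is *the* (universal) Kumjian–Pask algebra of `Λ` over `R`:
`(s, t)` is a Kumjian–Pask `Λ`-family generating `B`, and every Kumjian–Pask `Λ`-family
in an `R`-algebra `A` factors uniquely through it. -/
def IsUniversalKP (R : Type) [CommRing R] (B : Type) [NonUnitalRing B]
    [Module R B] [SMulCommClass R B B] [IsScalarTower R B B]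
    (s t : Λ.Path → B) : Prop :=
  Λ.IsKPFamily s t ∧
  NonUnitalAlgebra.adjoin R (Set.range s ∪ Set.range t) = ⊤ ∧
  ∀ (A : Type) [NonUnitalRing A] [Module R A] [SMulCommClass R A A]
    [IsScalarTower R A A] (S T : Λ.Path → A), Λ.IsKPFamily S T →
      ∃! π : B →ₙₐ[R] A, (∀ p, π (s p) = S p) ∧ (∀ p, π (t p) = T p)

/-- A boundary path of `Λ`: a degree-preserving functor `x : Ω_{k,m} → Λ`
(for `m = deg x ∈ (ℕ∪{∞})ᵏ`), recorded via its segments `seg p q = x(p,q)`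
for `p ≤ q ≤ m` (the value of `seg` outside this domain is junk), and satisfying
the boundary-path condition with respect to finite exhaustive sets. -/
structure BoundaryPath (Λ : KGraph k) where
  deg : Fin k → ℕ∞
  seg : (Fin k → ℕ) → (Fin k → ℕ) → Λ.Path
  deg_seg : ∀ p q, p ≤ q → (∀ i, (q i : ℕ∞) ≤ deg i) → Λ.deg (seg p q) = q - p
  seg_self : ∀ p, (∀ i, (p i : ℕ∞) ≤ deg i) →
    seg p p = Λ.vertex (Λ.src (seg p p))
  src_seg : ∀ p q r, p ≤ q → q ≤ r → (∀ i, (r i : ℕ∞) ≤ deg i) →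
    Λ.src (seg p q) = Λ.rng (seg q r)
  comp_seg : ∀ p q r, p ≤ q → q ≤ r → (∀ i, (r i : ℕ∞) ≤ deg i) →
    Λ.comp (seg p q) (seg q r) = seg p r
  boundary : ∀ n : Fin k → ℕ, (∀ i, (n i : ℕ∞) ≤ deg i) →
    ∀ E : Set Λ.Path, Λ.FE (Λ.src (seg n n)) E →
      ∃ p ∈ E, (∀ i, ((n + Λ.deg p) i : ℕ∞) ≤ deg i) ∧ seg n (n + Λ.deg p) = p

namespace BoundaryPath

variable {Λ : KGraph k}

/-- The vertex `x(n)` of a boundary path. -/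
def vtx (x : Λ.BoundaryPath) (n : Fin k → ℕ) : Λ.Obj := Λ.src (x.seg n n)

/-- The range `r(x) = x(0)` of a boundary path. -/
def rng (x : Λ.BoundaryPath) : Λ.Obj := x.vtx 0

end BoundaryPath

/-- `IsShift n x y` says that `y = σⁿ x` is the shift of the boundary path `x` by
`n ≤ d(x)`. -/
def IsShift (n : Fin k → ℕ) (x y : Λ.BoundaryPath) : Prop :=
  (∀ i, (n i : ℕ∞) ≤ x.deg i) ∧
  (∀ i, y.deg i = x.deg i - (n i : ℕ∞)) ∧
  ∀ p q, p ≤ q → (∀ i, (q i : ℕ∞) ≤ y.deg i) → y.seg p q = x.seg (n + p) (n + q)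

/-- `IsConcat p x y` says that `y = p·x` is the concatenation of the path `p` with the
boundary path `x` (so `y(0, d p) = p` and `σ^{d p} y = x`). -/
def IsConcat (p : Λ.Path) (x y : Λ.BoundaryPath) : Prop :=
  Λ.IsShift (Λ.deg p) y x ∧ y.seg 0 (Λ.deg p) = p

/-- A boundary path `x` is aperiodic if distinct paths with source `r(x)` give distinct
concatenations `p·x ≠ q·x`. -/
def AperiodicBP (x : Λ.BoundaryPath) : Prop :=
  ∀ p q, Λ.src p = x.rng → Λ.src q = x.rng → p ≠ q →
    ∀ y, Λ.IsConcat p x y → ¬Λ.IsConcat q x y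

/-- `Λ` is aperiodic: every vertex receives an aperiodic boundary path. -/
def Aperiodic : Prop :=
  ∀ v : Λ.Obj, ∃ x : Λ.BoundaryPath, x.rng = v ∧ Λ.AperiodicBP x

/-- `Λ` is cofinal: for every vertex `v` and boundary path `x` there is `n ≤ d(x)`
with `vΛx(n) ≠ ∅`. -/
def Cofinal : Prop :=
  ∀ (v : Λ.Obj) (x : Λ.BoundaryPath), ∃ n : Fin k → ℕ,
    (∀ i, (n i : ℕ∞) ≤ x.deg i) ∧ ∃ p, Λ.rng p = v ∧ Λ.src p = x.vtx n

/-- The boundary-path groupoid `G_Λ` as a set of triples `(x, m, y)` with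
`σᵖ x = σ^q y` and `m = p - q`. -/
def BPG : Set (Λ.BoundaryPath × (Fin k → ℤ) × Λ.BoundaryPath) :=
  {a | ∃ (p q : Fin k → ℕ) (z : Λ.BoundaryPath),
    (fun i => (p i : ℤ) - (q i : ℤ)) = a.2.1 ∧
    Λ.IsShift p a.1 z ∧ Λ.IsShift q a.2.2 z}

/-- `Z(p) = p ∂Λ`, the cylinder set of boundary paths with prefix `p`. -/
def ZC (p : Λ.Path) : Set Λ.BoundaryPath := {x | ∃ z, Λ.IsConcat p z x}

/-- `Z(p *ₛ q)`. -/
def ZP (p q : Λ.Path) : Set (Λ.BoundaryPath × (Fin k → ℤ) × Λ.BoundaryPath) :=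
  {a | a.2.1 = (fun i => (Λ.deg p i : ℤ) - (Λ.deg q i : ℤ)) ∧
    a.1 ∈ Λ.ZC p ∧ a.2.2 ∈ Λ.ZC q ∧
    ∃ z, Λ.IsShift (Λ.deg p) a.1 z ∧ Λ.IsShift (Λ.deg q) a.2.2 z}

/-- `Z(p *ₛ q \ G)`. -/
def ZPD (p q : Λ.Path) (G : Set Λ.Path) :
    Set (Λ.BoundaryPath × (Fin k → ℤ) × Λ.BoundaryPath) :=
  Λ.ZP p q \ ⋃ ν ∈ G, Λ.ZP (Λ.comp p ν) (Λ.comp q ν)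

/-- The boundary-path groupoid `G_Λ` as a type. -/
abbrev bpSpace : Type := {a // a ∈ Λ.BPG}

/-- The topology on `G_Λ` generated by the basic sets `Z(p *ₛ q \ G)` with `G` finite. -/
def bpTop : TopologicalSpace Λ.bpSpace :=
  TopologicalSpace.generateFrom
    {V | ∃ (p q : Λ.Path) (G : Set Λ.Path), Λ.src p = Λ.src q ∧
      (∀ ν ∈ G, Λ.rng ν = Λ.src p) ∧ G.Finite ∧
      V = Subtype.val ⁻¹' Λ.ZPD p q G}

theorem isShift_zero (x : Λ.BoundaryPath) : Λ.IsShift 0 x x :=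
  ⟨fun i => by simp, fun i => by simp, fun p q _ _ => by simp⟩

/-- The unit space `G_Λ^{(0)}` of the boundary-path groupoid. -/
def unitSet : Set Λ.bpSpace := {a | a.1.2.1 = 0 ∧ a.1.1 = a.1.2.2}

/-- The unit `(x, 0, x)` of `G_Λ` corresponding to a boundary path `x`. -/
def unitOf (x : Λ.BoundaryPath) : Λ.bpSpace :=
  ⟨(x, 0, x), ⟨0, 0, x, by funext i; simp, Λ.isShift_zero x, Λ.isShift_zero x⟩⟩

end KGraph
namespace KGraph

open scoped ENat

/-! ### `ℕ∞` arithmetic helpers -/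

private lemma eA {a c : ℕ} {b : ℕ∞} (hc : (c : ℕ∞) ≤ b) :
    (a : ℕ∞) ≤ b - (c : ℕ∞) ↔ ((a + c : ℕ) : ℕ∞) ≤ b := by
  induction b using ENat.recTopCoe with
  | top => simp
  | coe n =>
    have hcn : c ≤ n := by exact_mod_cast hc
    rw [← ENat.coe_sub, Nat.cast_le, Nat.cast_le]
    omega

private lemma eAddSub {b : ℕ∞} {c : ℕ} (h : (c : ℕ∞) ≤ b) :
    (b - (c : ℕ∞)) + (c : ℕ∞) = b := by
  induction b using ENat.recTopCoe with
  | top => simp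
  | coe n =>
    have hcn : c ≤ n := by exact_mod_cast h
    rw [← ENat.coe_sub, ← Nat.cast_add, Nat.cast_inj]
    omega

private lemma eH1 (w : ℕ∞) {c n : ℕ} (h : c ≤ n) :
    w + (c : ℕ∞) - (n : ℕ∞) = w - ((n - c : ℕ) : ℕ∞) := by
  induction w using ENat.recTopCoe with
  | top => rw [top_add, ENat.top_sub_coe, ENat.top_sub_coe]
  | coe m =>
    rw [← Nat.cast_add, ← ENat.coe_sub, ← ENat.coe_sub, Nat.cast_inj]
    omega

private lemma eH2 (w : ℕ∞) (c r : ℕ) :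
    w + (c : ℕ∞) - ((c + r : ℕ) : ℕ∞) = w - (r : ℕ∞) := by
  induction w using ENat.recTopCoe with
  | top => rw [top_add, ENat.top_sub_coe, ENat.top_sub_coe]
  | coe m =>
    rw [← Nat.cast_add, ← ENat.coe_sub, ← ENat.coe_sub, Nat.cast_inj]
    omega

private lemma eH3 (w : ℕ∞) {s r : ℕ} (h : r ≤ s) :
    w + (s : ℕ∞) - (r : ℕ∞) = w + ((s - r : ℕ) : ℕ∞) := by
  induction w using ENat.recTopCoe with
  | top => simp
  | coe m =>
    rw [← Nat.cast_add, ← ENat.coe_sub, ← Nat.cast_add, Nat.cast_inj]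
    omega

private lemma eSub2 {n r : ℕ} {w : ℕ∞} (h : (n : ℕ∞) ≤ w) :
    ((n - r : ℕ) : ℕ∞) ≤ w - (r : ℕ∞) := by
  induction w using ENat.recTopCoe with
  | top => simp
  | coe m =>
    have : n ≤ m := by exact_mod_cast h
    rw [← ENat.coe_sub, Nat.cast_le]
    omega

private lemma eSub3 {n t : ℕ} {w : ℕ∞} (h : (n : ℕ∞) ≤ w + (t : ℕ∞)) :
    ((n - t : ℕ) : ℕ∞) ≤ w := by
  induction w using ENat.recTopCoe with
  | top => simp
  | coe m =>
    have : n ≤ m + t := by exact_mod_cast h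
    rw [Nat.cast_le]
    omega

variable {k : ℕ} {Λ : KGraph k}

private lemma boundConv {x : Λ.BoundaryPath} {n q : Fin k → ℕ}
    (hn : ∀ i, (n i : ℕ∞) ≤ x.deg i)
    (hq : ∀ i, (q i : ℕ∞) ≤ x.deg i - (n i : ℕ∞)) :
    ∀ i, (((n + q) i : ℕ) : ℕ∞) ≤ x.deg i := by
  intro i
  have h := (eA (hn i)).1 (hq i)
  have e : q i + n i = (n + q) i := by simp [Pi.add_apply]; omega
  rwa [e] at h

/-! ### The explicit shift of a boundary path -/

def shiftBP (x : Λ.BoundaryPath) (n : Fin k → ℕ)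
    (hn : ∀ i, (n i : ℕ∞) ≤ x.deg i) : Λ.BoundaryPath where
  deg i := x.deg i - (n i : ℕ∞)
  seg p q := x.seg (n + p) (n + q)
  deg_seg p q hpq hq := by
    rw [x.deg_seg (n + p) (n + q) (add_le_add_right hpq n) (boundConv hn hq)]
    funext i
    simp only [Pi.sub_apply, Pi.add_apply]
    omega
  seg_self p hp := x.seg_self (n + p) (boundConv hn hp)
  src_seg p q r hpq hqr hr :=
    x.src_seg (n + p) (n + q) (n + r) (add_le_add_right hpq n)
      (add_le_add_right hqr n) (boundConv hn hr)
  comp_seg p q r hpq hqr hr :=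
    x.comp_seg (n + p) (n + q) (n + r) (add_le_add_right hpq n)
      (add_le_add_right hqr n) (boundConv hn hr)
  boundary m hm E hE := by
    obtain ⟨p, hpE, hb, hseg⟩ := x.boundary (n + m) (boundConv hn hm) E hE
    refine ⟨p, hpE, fun i => ?_, ?_⟩
    · rw [eA (hn i)]
      have h := hb i
      have e : (m + Λ.deg p) i + n i = (n + m + Λ.deg p) i := by
        simp [Pi.add_apply]; omega
      rwa [e]
    · show x.seg (n + m) (n + (m + Λ.deg p)) = p
      rw [← add_assoc n m (Λ.deg p)]; exact hseg

lemma isShift_shiftBP (x : Λ.BoundaryPath) (n : Fin k → ℕ)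
    (hn : ∀ i, (n i : ℕ∞) ≤ x.deg i) : Λ.IsShift n x (shiftBP x n hn) :=
  ⟨hn, fun _ => rfl, fun _ _ _ _ => rfl⟩

/-! ### Unique factorisation helpers -/

lemma fact_eq (Λ : KGraph k) {p a b c d : Λ.Path} {m n : Fin k → ℕ}
    (h : Λ.deg p = m + n)
    (hab : Λ.src a = Λ.rng b) (hda : Λ.deg a = m) (hdb : Λ.deg b = n)
    (hcab : Λ.comp a b = p)
    (hcd : Λ.src c = Λ.rng d) (hdc : Λ.deg c = m) (hdd : Λ.deg d = n)
    (hccd : Λ.comp c d = p) : a = c ∧ b = d := by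
  obtain ⟨x, -, hu⟩ := Λ.factorisation p m n h
  have h1 := hu (a, b) ⟨hab, hda, hdb, hcab⟩
  have h2 := hu (c, d) ⟨hcd, hdc, hdd, hccd⟩
  have h3 : (a, b) = (c, d) := h1.trans h2.symm
  exact ⟨congrArg Prod.fst h3, congrArg Prod.snd h3⟩

lemma seg_factor (x : Λ.BoundaryPath) {a τ : Λ.Path} (hat : Λ.src a = Λ.rng τ)
    (hd : ∀ i, ((Λ.deg (Λ.comp a τ)) i : ℕ∞) ≤ x.deg i)
    (hx : x.seg 0 (Λ.deg (Λ.comp a τ)) = Λ.comp a τ) :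
    x.seg 0 (Λ.deg a) = a ∧ x.seg (Λ.deg a) (Λ.deg (Λ.comp a τ)) = τ := by
  have hN : Λ.deg (Λ.comp a τ) = Λ.deg a + Λ.deg τ := Λ.deg_comp a τ hat
  have hle : Λ.deg a ≤ Λ.deg (Λ.comp a τ) := by
    intro i; rw [hN]; exact Nat.le_add_right _ _
  have hdega : ∀ i, ((Λ.deg a) i : ℕ∞) ≤ x.deg i := fun i =>
    le_trans (Nat.cast_le.mpr (hle i)) (hd i)
  have hsplit : x.seg 0 (Λ.deg (Λ.comp a τ)) =
      Λ.comp (x.seg 0 (Λ.deg a)) (x.seg (Λ.deg a) (Λ.deg (Λ.comp a τ))) :=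
    (x.comp_seg 0 (Λ.deg a) _ zero_le hle hd).symm
  exact Λ.fact_eq hN
    (x.src_seg 0 (Λ.deg a) _ zero_le hle hd)
    (by rw [x.deg_seg 0 (Λ.deg a) zero_le hdega]; simp)
    (by rw [x.deg_seg (Λ.deg a) _ hle hd, hN]; funext i;
        simp only [Pi.sub_apply, Pi.add_apply]; omega)
    (hsplit.symm.trans hx) hat rfl rfl rfl

/-! ### Cylinder sets of composites -/

lemma ZP_comp_subset (Λ : KGraph k) {a b τ : Λ.Path}
    (hab : Λ.src a = Λ.src b) (hat : Λ.src a = Λ.rng τ) :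
    Λ.ZP (Λ.comp a τ) (Λ.comp b τ) ⊆ Λ.ZP a b := by
  have hbt : Λ.src b = Λ.rng τ := hab ▸ hat
  rintro ⟨x, m, y⟩ ⟨hm, ⟨zc, hsc, hc0⟩, ⟨zd, hsd, hd0⟩, z₀, hxz, hyz⟩
  have hdc : Λ.deg (Λ.comp a τ) = Λ.deg a + Λ.deg τ := Λ.deg_comp a τ hat
  have hdd : Λ.deg (Λ.comp b τ) = Λ.deg b + Λ.deg τ := Λ.deg_comp b τ hbt
  have hdcx : ∀ i, ((Λ.deg (Λ.comp a τ)) i : ℕ∞) ≤ x.deg i := hxz.1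
  have hddy : ∀ i, ((Λ.deg (Λ.comp b τ)) i : ℕ∞) ≤ y.deg i := hyz.1
  have hdax : ∀ i, ((Λ.deg a) i : ℕ∞) ≤ x.deg i := fun i =>
    le_trans (Nat.cast_le.mpr (by rw [hdc]; exact Nat.le_add_right _ _)) (hdcx i)
  have hdby : ∀ i, ((Λ.deg b) i : ℕ∞) ≤ y.deg i := fun i =>
    le_trans (Nat.cast_le.mpr (by rw [hdd]; exact Nat.le_add_right _ _)) (hddy i)
  obtain ⟨hxa, hxτ⟩ := seg_factor x hat hdcx hc0
  obtain ⟨hyb, hyτ⟩ := seg_factor y hbt hddy hd0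
  -- degree bookkeeping
  have hxdeg : ∀ i, x.deg i = z₀.deg i + ((Λ.deg (Λ.comp a τ)) i : ℕ∞) := fun i => by
    rw [hxz.2.1 i]; exact (eAddSub (hxz.1 i)).symm
  have hydeg : ∀ i, y.deg i = z₀.deg i + ((Λ.deg (Λ.comp b τ)) i : ℕ∞) := fun i => by
    rw [hyz.2.1 i]; exact (eAddSub (hyz.1 i)).symm
  have hzx : ∀ i, x.deg i - ((Λ.deg a) i : ℕ∞) = z₀.deg i + ((Λ.deg τ) i : ℕ∞) := fun i => by
    rw [hxdeg i, eH3 _ (by rw [hdc]; exact Nat.le_add_right _ _ :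
         Λ.deg a i ≤ Λ.deg (Λ.comp a τ) i)]
    congr 1
    rw [Nat.cast_inj]
    rw [hdc]; simp only [Pi.add_apply, Pi.sub_apply]; omega
  have hzy : ∀ i, y.deg i - ((Λ.deg b) i : ℕ∞) = z₀.deg i + ((Λ.deg τ) i : ℕ∞) := fun i => by
    rw [hydeg i, eH3 _ (by rw [hdd]; exact Nat.le_add_right _ _ :
         Λ.deg b i ≤ Λ.deg (Λ.comp b τ) i)]
    congr 1
    rw [Nat.cast_inj]
    rw [hdd]; simp only [Pi.add_apply, Pi.sub_apply]; omega
  refine ⟨?_, ⟨shiftBP x (Λ.deg a) hdax, isShift_shiftBP x _ hdax, hxa⟩,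
    ⟨shiftBP y (Λ.deg b) hdby, isShift_shiftBP y _ hdby, hyb⟩,
    shiftBP x (Λ.deg a) hdax, isShift_shiftBP x _ hdax, ?_, ?_, ?_⟩
  · -- the ℤᵏ component
    rw [hm]; funext i
    rw [hdc, hdd]; simp only [Pi.add_apply, Pi.sub_apply]; push_cast; ring
  · -- bound for the shift of `y`
    exact hdby
  · -- degrees of the common shift
    intro i
    show x.deg i - ((Λ.deg a) i : ℕ∞) = y.deg i - ((Λ.deg b) i : ℕ∞)
    rw [hzx i, hzy i]
  · -- the segment condition
    intro s t hst ht
    have htz : ∀ i, (t i : ℕ∞) ≤ x.deg i - ((Λ.deg a) i : ℕ∞) := ht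
    show x.seg (Λ.deg a + s) (Λ.deg a + t) = y.seg (Λ.deg b + s) (Λ.deg b + t)
    set N : Fin k → ℕ := fun i => max (t i) (Λ.deg τ i) with hNdef
    have hτz : ∀ i, ((Λ.deg τ) i : ℕ∞) ≤ x.deg i - ((Λ.deg a) i : ℕ∞) := fun i => by
      rw [hzx i]; exact le_add_self
    have hNz : ∀ i, (N i : ℕ∞) ≤ x.deg i - ((Λ.deg a) i : ℕ∞) := fun i => by
      rcases max_choice (t i) (Λ.deg τ i) with h | h
      · show ((max (t i) (Λ.deg τ i) : ℕ) : ℕ∞) ≤ _; rw [h]; exact htz i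
      · show ((max (t i) (Λ.deg τ i) : ℕ) : ℕ∞) ≤ _; rw [h]; exact hτz i
    have hNzy : ∀ i, (N i : ℕ∞) ≤ y.deg i - ((Λ.deg b) i : ℕ∞) := fun i => by
      rw [hzy i, ← hzx i]; exact hNz i
    have hNx : ∀ i, (((Λ.deg a + N) i : ℕ) : ℕ∞) ≤ x.deg i := boundConv hdax hNz
    have hNy : ∀ i, (((Λ.deg b + N) i : ℕ) : ℕ∞) ≤ y.deg i := boundConv hdby hNzy
    have hτN : Λ.deg τ ≤ N := fun i => le_max_right _ _
    have htN : t ≤ N := fun i => le_max_left _ _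
    have hsN : s ≤ N := le_trans hst htN
    have hτNp : ∀ i, Λ.deg τ i ≤ N i := fun i => le_max_right _ _
    have htNp : ∀ i, t i ≤ N i := fun i => le_max_left _ _
    have hstp : ∀ i, s i ≤ t i := hst
    have hsNp : ∀ i, s i ≤ N i := fun i => le_trans (hstp i) (htNp i)
    -- the common big segment
    have hz₀b : ∀ i, ((((N - Λ.deg τ)) i : ℕ) : ℕ∞) ≤ z₀.deg i := fun i => by
      refine eSub3 ?_
      rw [← hzx i]; exact hNz i
    have hxbig : x.seg (Λ.deg a) (Λ.deg a + N) =
        Λ.comp τ (z₀.seg 0 ((N - Λ.deg τ))) := by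
      have hsplit := x.comp_seg (Λ.deg a) (Λ.deg a + Λ.deg τ) (Λ.deg a + N)
        (fun i => Nat.le_add_right _ _) (add_le_add_right hτN _) hNx
      have htail := hxz.2.2 0 ((N - Λ.deg τ)) zero_le hz₀b
      have e1 : Λ.deg (Λ.comp a τ) + 0 = Λ.deg a + Λ.deg τ := by
        rw [add_zero, hdc]
      have e2 : Λ.deg (Λ.comp a τ) + ((N - Λ.deg τ)) = Λ.deg a + N := by
        funext i; rw [hdc]; simp only [Pi.add_apply, Pi.sub_apply]
        have := hτNp i; omega
      rw [e1, e2] at htail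
      have e3 : Λ.deg a + Λ.deg τ = Λ.deg (Λ.comp a τ) := hdc.symm
      rw [← hsplit, ← htail]
      congr 1
      rw [e3]; exact hxτ
    have hybig : y.seg (Λ.deg b) (Λ.deg b + N) =
        Λ.comp τ (z₀.seg 0 ((N - Λ.deg τ))) := by
      have hsplit := y.comp_seg (Λ.deg b) (Λ.deg b + Λ.deg τ) (Λ.deg b + N)
        (fun i => Nat.le_add_right _ _) (add_le_add_right hτN _) hNy
      have htail := hyz.2.2 0 ((N - Λ.deg τ)) zero_le hz₀b
      have e1 : Λ.deg (Λ.comp b τ) + 0 = Λ.deg b + Λ.deg τ := by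
        rw [add_zero, hdd]
      have e2 : Λ.deg (Λ.comp b τ) + ((N - Λ.deg τ)) = Λ.deg b + N := by
        funext i; rw [hdd]; simp only [Pi.add_apply, Pi.sub_apply]
        have := hτNp i; omega
      rw [e1, e2] at htail
      have e3 : Λ.deg b + Λ.deg τ = Λ.deg (Λ.comp b τ) := hdd.symm
      rw [← hsplit, ← htail]
      congr 1
      rw [e3]; exact hyτ
    have hΘ : x.seg (Λ.deg a) (Λ.deg a + N) = y.seg (Λ.deg b) (Λ.deg b + N) :=
      hxbig.trans hybig.symm
    -- bounds for intermediate points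
    have haleq : ∀ u v : Fin k → ℕ, u ≤ v → Λ.deg a + u ≤ Λ.deg a + v :=
      fun u v h => add_le_add_right h _
    have hxs : ∀ i, (((Λ.deg a + s) i : ℕ) : ℕ∞) ≤ x.deg i :=
      boundConv hdax (fun i => le_trans (Nat.cast_le.mpr (hsN i)) (hNz i))
    have hxt : ∀ i, (((Λ.deg a + t) i : ℕ) : ℕ∞) ≤ x.deg i :=
      boundConv hdax (fun i => le_trans (Nat.cast_le.mpr (htN i)) (hNz i))
    have hys : ∀ i, (((Λ.deg b + s) i : ℕ) : ℕ∞) ≤ y.deg i :=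
      boundConv hdby (fun i => le_trans (Nat.cast_le.mpr (hsN i)) (hNzy i))
    have hyt : ∀ i, (((Λ.deg b + t) i : ℕ) : ℕ∞) ≤ y.deg i :=
      boundConv hdby (fun i => le_trans (Nat.cast_le.mpr (htN i)) (hNzy i))
    -- first factorisation: split the big segment at `s`
    have hdegΘ : Λ.deg (x.seg (Λ.deg a) (Λ.deg a + N)) = s + (N - s) := by
      rw [x.deg_seg (Λ.deg a) (Λ.deg a + N)
        (fun i => Nat.le_add_right (Λ.deg a i) (N i)) hNx]
      funext i; simp only [Pi.sub_apply, Pi.add_apply]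
      have := hsNp i; omega
    have step1 := Λ.fact_eq hdegΘ
      (x.src_seg (Λ.deg a) (Λ.deg a + s) (Λ.deg a + N)
        (fun i => Nat.le_add_right _ _) (haleq s N hsN) hNx)
      (by rw [x.deg_seg (Λ.deg a) (Λ.deg a + s) (by
            intro i; exact Nat.le_add_right _ _) hxs]
          funext i; simp only [Pi.sub_apply, Pi.add_apply]; omega)
      (by rw [x.deg_seg (Λ.deg a + s) (Λ.deg a + N) (haleq s N hsN) hNx]
          funext i; simp only [Pi.sub_apply, Pi.add_apply]; omega)
      (x.comp_seg (Λ.deg a) (Λ.deg a + s) (Λ.deg a + N) (by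
          intro i; exact Nat.le_add_right _ _) (haleq s N hsN) hNx)
      (y.src_seg (Λ.deg b) (Λ.deg b + s) (Λ.deg b + N) (by
          intro i; exact Nat.le_add_right _ _) (add_le_add_right hsN _) hNy)
      (by rw [y.deg_seg (Λ.deg b) (Λ.deg b + s) (by
            intro i; exact Nat.le_add_right _ _) hys]
          funext i; simp only [Pi.sub_apply, Pi.add_apply]; omega)
      (by rw [y.deg_seg (Λ.deg b + s) (Λ.deg b + N) (add_le_add_right hsN _) hNy]
          funext i; simp only [Pi.sub_apply, Pi.add_apply]; omega)
      ((y.comp_seg (Λ.deg b) (Λ.deg b + s) (Λ.deg b + N) (by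
          intro i; exact Nat.le_add_right _ _) (add_le_add_right hsN _) hNy).trans hΘ.symm)
    have hmid : x.seg (Λ.deg a + s) (Λ.deg a + N) = y.seg (Λ.deg b + s) (Λ.deg b + N) :=
      step1.2
    -- second factorisation: split the middle segment at `t`
    have hdegΘ' : Λ.deg (x.seg (Λ.deg a + s) (Λ.deg a + N)) =
        (t - s) + (N - t) := by
      rw [x.deg_seg (Λ.deg a + s) (Λ.deg a + N) (haleq s N hsN) hNx]
      funext i; simp only [Pi.sub_apply, Pi.add_apply]
      have h1 := hstp i; have h2 := htNp i; omega
    have step2 := Λ.fact_eq hdegΘ'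
      (x.src_seg (Λ.deg a + s) (Λ.deg a + t) (Λ.deg a + N) (haleq s t hst)
        (haleq t N htN) hNx)
      (by rw [x.deg_seg (Λ.deg a + s) (Λ.deg a + t) (haleq s t hst) hxt]
          funext i; simp only [Pi.sub_apply, Pi.add_apply]; omega)
      (by rw [x.deg_seg (Λ.deg a + t) (Λ.deg a + N) (haleq t N htN) hNx]
          funext i; simp only [Pi.sub_apply, Pi.add_apply]; omega)
      (x.comp_seg (Λ.deg a + s) (Λ.deg a + t) (Λ.deg a + N) (haleq s t hst)
        (haleq t N htN) hNx)
      (y.src_seg (Λ.deg b + s) (Λ.deg b + t) (Λ.deg b + N) (add_le_add_right hst _)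
        (add_le_add_right htN _) hNy)
      (by rw [y.deg_seg (Λ.deg b + s) (Λ.deg b + t) (add_le_add_right hst _) hyt]
          funext i; simp only [Pi.sub_apply, Pi.add_apply]; omega)
      (by rw [y.deg_seg (Λ.deg b + t) (Λ.deg b + N) (add_le_add_right htN _) hNy]
          funext i; simp only [Pi.sub_apply, Pi.add_apply]; omega)
      ((y.comp_seg (Λ.deg b + s) (Λ.deg b + t) (Λ.deg b + N) (add_le_add_right hst _)
        (add_le_add_right htN _) hNy).trans hmid.symm)
    exact step2.1

/-! ### Intersections of basic cylinder pair sets -/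

lemma ZP_inter_eq (Λ : KGraph k) (hfa : Λ.FinitelyAligned) (p q a b : Λ.Path)
    (hpq : Λ.src p = Λ.src q) (hab : Λ.src a = Λ.src b) :
    ∃ F : Finset Λ.Path,
      (∀ ν ∈ F, Λ.src p = Λ.rng ν) ∧
      (Λ.ZP p q ∩ Λ.ZP a b = ⋃ ν ∈ F, Λ.ZP (Λ.comp p ν) (Λ.comp q ν)) ∧
      (∀ ν ∈ F, ∀ ν' ∈ F, ν ≠ ν' →
        Disjoint (Λ.ZP (Λ.comp p ν) (Λ.comp q ν))
          (Λ.ZP (Λ.comp p ν') (Λ.comp q ν'))) := by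
  classical
  set Fset : Set Λ.Path :=
    {ν | ∃ τ, (ν, τ) ∈ Λ.minPairs p a ∧ Λ.comp q ν = Λ.comp b τ} with hFset
  have hfin : Fset.Finite := by
    refine ((hfa p a).image Prod.fst).subset ?_
    rintro ν ⟨τ, hτ, -⟩
    exact ⟨(ν, τ), hτ, rfl⟩
  refine ⟨hfin.toFinset, ?_, ?_, ?_⟩
  · intro ν hν
    rw [Set.Finite.mem_toFinset] at hν
    obtain ⟨τ, hmp, -⟩ := hν
    exact hmp.1
  · apply Set.Subset.antisymm
    · -- hard direction
      rintro ⟨x, m, y⟩ ⟨⟨hm1, ⟨z1, hs1, hx1⟩, ⟨w1, hsw1, hy1⟩, z, hzx, hzy⟩,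
        ⟨hm2, ⟨z2, hs2, hx2⟩, ⟨w2, hsw2, hy2⟩, z', hzx', hzy'⟩⟩
      set N : Fin k → ℕ := fun i => max (Λ.deg p i) (Λ.deg a i) with hNdef
      have hdpN : ∀ i, Λ.deg p i ≤ N i := fun i => le_max_left _ _
      have hdaN : ∀ i, Λ.deg a i ≤ N i := fun i => le_max_right _ _
      have hdpNle : Λ.deg p ≤ N := hdpN
      have hdaNle : Λ.deg a ≤ N := hdaN
      have hNx : ∀ i, (N i : ℕ∞) ≤ x.deg i := fun i => by
        rcases max_choice (Λ.deg p i) (Λ.deg a i) with h | h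
        · show ((max (Λ.deg p i) (Λ.deg a i) : ℕ) : ℕ∞) ≤ _; rw [h]; exact hzx.1 i
        · show ((max (Λ.deg p i) (Λ.deg a i) : ℕ) : ℕ∞) ≤ _; rw [h]; exact hzx'.1 i
      have hcpρ : Λ.comp p (x.seg (Λ.deg p) N) = x.seg 0 N := by
        have h := x.comp_seg 0 (Λ.deg p) N zero_le hdpNle hNx
        rw [hx1] at h; exact h
      have hcaτ : Λ.comp a (x.seg (Λ.deg a) N) = x.seg 0 N := by
        have h := x.comp_seg 0 (Λ.deg a) N zero_le hdaNle hNx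
        rw [hx2] at h; exact h
      have hsrcρ : Λ.src p = Λ.rng (x.seg (Λ.deg p) N) := by
        have h := x.src_seg 0 (Λ.deg p) N zero_le hdpNle hNx
        rwa [hx1] at h
      have hsrcτ : Λ.src a = Λ.rng (x.seg (Λ.deg a) N) := by
        have h := x.src_seg 0 (Λ.deg a) N zero_le hdaNle hNx
        rwa [hx2] at h
      have hdegN : Λ.deg (x.seg 0 N) = N := by
        rw [x.deg_seg 0 N zero_le hNx]; funext i
        simp only [Pi.sub_apply, Pi.zero_apply]; omega
      have hdegρ : Λ.deg (x.seg (Λ.deg p) N) = fun i => N i - Λ.deg p i := by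
        rw [x.deg_seg (Λ.deg p) N hdpNle hNx]; funext i; simp [Pi.sub_apply]
      have hmp : ((x.seg (Λ.deg p) N), (x.seg (Λ.deg a) N)) ∈ Λ.minPairs p a := by
        refine ⟨hsrcρ, hsrcτ, by rw [hcpρ, hcaτ], ?_⟩
        rw [hcpρ, hdegN]
        funext i; exact (Pi.sup_apply (Λ.deg p) (Λ.deg a) i).symm
      -- identify ρ inside y
      have hrz : ∀ i, ((((N - Λ.deg p)) i : ℕ) : ℕ∞) ≤ z.deg i := fun i => by
        rw [hzx.2.1 i]; exact eSub2 (hNx i)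
      have hρz : x.seg (Λ.deg p) N = z.seg 0 ((N - Λ.deg p)) := by
        have h := hzx.2.2 0 ((N - Λ.deg p)) zero_le hrz
        have e1 : Λ.deg p + 0 = Λ.deg p := add_zero _
        have e2 : Λ.deg p + ((N - Λ.deg p)) = N := by
          funext i; simp only [Pi.add_apply, Pi.sub_apply]; have := hdpN i; omega
        rw [e1, e2] at h
        exact h.symm
      have hrzy : ∀ i, ((((N - Λ.deg p)) i : ℕ) : ℕ∞) ≤
          y.deg i - ((Λ.deg q) i : ℕ∞) := fun i => by
        rw [← hzy.2.1 i]; exact hrz i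
      have hKy : ∀ i, (((Λ.deg q + (N - Λ.deg p)) i : ℕ) : ℕ∞) ≤ y.deg i :=
        boundConv hzy.1 hrzy
      have hρy : x.seg (Λ.deg p) N =
          y.seg (Λ.deg q) (Λ.deg q + (N - Λ.deg p)) := by
        have h := hzy.2.2 0 ((N - Λ.deg p)) zero_le hrz
        rw [add_zero] at h
        rw [hρz, h]
      have hcqρ : Λ.comp q (x.seg (Λ.deg p) N) =
          y.seg 0 (Λ.deg q + (N - Λ.deg p)) := by
        have h := y.comp_seg 0 (Λ.deg q) (Λ.deg q + (N - Λ.deg p)) zero_le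
          (fun i => Nat.le_add_right _ _) hKy
        rw [hy1, ← hρy] at h; exact h
      -- identify τ inside y
      have hsz' : ∀ i, ((((N - Λ.deg a)) i : ℕ) : ℕ∞) ≤ z'.deg i := fun i => by
        rw [hzx'.2.1 i]; exact eSub2 (hNx i)
      have hτz' : x.seg (Λ.deg a) N = z'.seg 0 ((N - Λ.deg a)) := by
        have h := hzx'.2.2 0 ((N - Λ.deg a)) zero_le hsz'
        have e1 : Λ.deg a + 0 = Λ.deg a := add_zero _
        have e2 : Λ.deg a + ((N - Λ.deg a)) = N := by
          funext i; simp only [Pi.add_apply, Pi.sub_apply]; have := hdaN i; omega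
        rw [e1, e2] at h
        exact h.symm
      have hszy : ∀ i, ((((N - Λ.deg a)) i : ℕ) : ℕ∞) ≤
          y.deg i - ((Λ.deg b) i : ℕ∞) := fun i => by
        rw [← hzy'.2.1 i]; exact hsz' i
      have hKy' : ∀ i, (((Λ.deg b + (N - Λ.deg a)) i : ℕ) : ℕ∞) ≤ y.deg i :=
        boundConv hzy'.1 hszy
      have hτy : x.seg (Λ.deg a) N =
          y.seg (Λ.deg b) (Λ.deg b + (N - Λ.deg a)) := by
        have h := hzy'.2.2 0 ((N - Λ.deg a)) zero_le hsz'
        rw [add_zero] at h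
        rw [hτz', h]
      have hcbτ : Λ.comp b (x.seg (Λ.deg a) N) =
          y.seg 0 (Λ.deg b + (N - Λ.deg a)) := by
        have h := y.comp_seg 0 (Λ.deg b) (Λ.deg b + (N - Λ.deg a)) zero_le
          (fun i => Nat.le_add_right _ _) hKy'
        rw [hy2, ← hτy] at h; exact h
      -- the two upper indices agree
      have hidx : (Λ.deg q + (N - Λ.deg p)) =
          (Λ.deg b + (N - Λ.deg a)) := by
        funext i
        have e1 : m i = (Λ.deg p i : ℤ) - (Λ.deg q i : ℤ) := congrFun hm1 i
        have e2 : m i = (Λ.deg a i : ℤ) - (Λ.deg b i : ℤ) := congrFun hm2 i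
        rw [e1] at e2
        simp only [Pi.add_apply, Pi.sub_apply]
        have h1 := hdpN i; have h2 := hdaN i
        omega
      have hqρbτ : Λ.comp q (x.seg (Λ.deg p) N) = Λ.comp b (x.seg (Λ.deg a) N) := by
        rw [hcqρ, hcbτ, hidx]
      -- membership of ρ in the index set
      have hρF : x.seg (Λ.deg p) N ∈ Fset := ⟨x.seg (Λ.deg a) N, hmp, hqρbτ⟩
      refine Set.mem_iUnion₂.mpr ⟨x.seg (Λ.deg p) N,
        (Set.Finite.mem_toFinset hfin).mpr hρF, ?_⟩
      -- and the point lies in the corresponding basic set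
      have hdpρ : Λ.deg (Λ.comp p (x.seg (Λ.deg p) N)) = N := by rw [hcpρ, hdegN]
      have hdqρ : Λ.deg (Λ.comp q (x.seg (Λ.deg p) N)) =
          Λ.deg q + (N - Λ.deg p) := by
        rw [hcqρ, y.deg_seg 0 _ zero_le hKy]
        funext i; simp only [Pi.sub_apply, Pi.zero_apply]; omega
      refine ⟨?_, ?_, ?_, ?_⟩
      · rw [hdpρ, hdqρ]; funext i
        have e1 : m i = (Λ.deg p i : ℤ) - (Λ.deg q i : ℤ) := congrFun hm1 i
        simp only [Pi.add_apply, Pi.sub_apply]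
        have h1 := hdpN i
        push_cast
        omega
      · exact ⟨shiftBP x N hNx, by rw [hdpρ]; exact isShift_shiftBP x N hNx,
          by rw [hdpρ]; exact hcpρ.symm⟩
      · exact ⟨shiftBP y _ hKy, by rw [hdqρ]; exact isShift_shiftBP y _ hKy,
          by rw [hdqρ]; exact hcqρ.symm⟩
      · refine ⟨shiftBP x N hNx, by rw [hdpρ]; exact isShift_shiftBP x N hNx, ?_⟩
        rw [hdqρ]
        -- IsShift (deg q + (N - deg p)) y (shiftBP x N hNx)
        refine ⟨hKy, ?_, ?_⟩
        · intro i
          have hxdeg : x.deg i = z.deg i + ((Λ.deg p) i : ℕ∞) := by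
            rw [hzx.2.1 i]; exact (eAddSub (hzx.1 i)).symm
          have hydeg : y.deg i = z.deg i + ((Λ.deg q) i : ℕ∞) := by
            rw [hzy.2.1 i]; exact (eAddSub (hzy.1 i)).symm
          show x.deg i - (N i : ℕ∞) = _
          rw [hxdeg, hydeg, eH1 _ (hdpN i)]
          have e : (Λ.deg q + (N - Λ.deg p)) i =
              Λ.deg q i + (N i - Λ.deg p i) := by simp [Pi.add_apply, Pi.sub_apply]
          rw [e, eH2]
        · intro u v huv hv
          have hvz : ∀ i, ((((N - Λ.deg p)) + v) i : ℕ∞) ≤ z.deg i := fun i => by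
            have hv' : (v i : ℕ∞) ≤ x.deg i - (N i : ℕ∞) := hv i
            have h1 := (eA (hNx i)).1 hv'
            rw [hzx.2.1 i, eA (hzx.1 i)]
            have e : (((N - Λ.deg p)) + v) i + Λ.deg p i = v i + N i := by
              simp only [Pi.add_apply, Pi.sub_apply]; have := hdpN i; omega
            rw [e]; exact h1
          have h1 := hzx.2.2 (((N - Λ.deg p)) + u)
            (((N - Λ.deg p)) + v) (add_le_add_right huv _) hvz
          have h2 := hzy.2.2 (((N - Λ.deg p)) + u)
            (((N - Λ.deg p)) + v) (add_le_add_right huv _) hvz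
          have e1 : Λ.deg p + (((N - Λ.deg p)) + u) = N + u := by
            funext i; simp only [Pi.add_apply, Pi.sub_apply]; have := hdpN i; omega
          have e2 : Λ.deg p + (((N - Λ.deg p)) + v) = N + v := by
            funext i; simp only [Pi.add_apply, Pi.sub_apply]; have := hdpN i; omega
          have e3 : Λ.deg q + (((N - Λ.deg p)) + u) =
              (Λ.deg q + (N - Λ.deg p)) + u := by
            funext i; simp only [Pi.add_apply, Pi.sub_apply]; omega
          have e4 : Λ.deg q + (((N - Λ.deg p)) + v) =
              (Λ.deg q + (N - Λ.deg p)) + v := by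
            funext i; simp only [Pi.add_apply, Pi.sub_apply]; omega
          rw [e1, e2] at h1
          rw [e3, e4] at h2
          show x.seg (N + u) (N + v) = _
          rw [← h1, h2]
    · -- easy direction
      intro g hg
      rw [Set.mem_iUnion₂] at hg
      obtain ⟨ν, hνF, hgν⟩ := hg
      rw [Set.Finite.mem_toFinset] at hνF
      obtain ⟨τ, ⟨hr1, hr2, hceq, hdeq⟩, hqeq⟩ := hνF
      constructor
      · exact Λ.ZP_comp_subset hpq hr1 hgν
      · have : Λ.ZP (Λ.comp p ν) (Λ.comp q ν) = Λ.ZP (Λ.comp a τ) (Λ.comp b τ) := by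
          rw [hceq, hqeq]
        rw [this] at hgν
        exact Λ.ZP_comp_subset hab hr2 hgν
  · -- disjointness
    intro ν hν ν' hν' hne
    rw [Set.Finite.mem_toFinset] at hν hν'
    obtain ⟨τ, ⟨hr1, hr2, hceq, hdeq⟩, hqeq⟩ := hν
    obtain ⟨τ', ⟨hr1', hr2', hceq', hdeq'⟩, hqeq'⟩ := hν'
    rw [Set.disjoint_left]
    rintro ⟨x, m, y⟩ ⟨-, ⟨z1, hs1, hx1⟩, -, -⟩ ⟨-, ⟨z2, hs2, hx2⟩, -, -⟩
    -- both prefixes of x of the same degree, hence equal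
    apply hne
    have hdeg1 : Λ.deg (Λ.comp p ν) = Λ.deg p ⊔ Λ.deg a := hdeq
    have hdeg2 : Λ.deg (Λ.comp p ν') = Λ.deg p ⊔ Λ.deg a := hdeq'
    have hxx : Λ.comp p ν = Λ.comp p ν' := by
      rw [← hx1, ← hx2, hdeg1, hdeg2]
    have hcν : Λ.deg (Λ.comp p ν) = Λ.deg p + Λ.deg ν := Λ.deg_comp p ν hr1
    have hcν' : Λ.deg (Λ.comp p ν') = Λ.deg p + Λ.deg ν' := Λ.deg_comp p ν' hr1'
    have hdν : Λ.deg ν' = Λ.deg ν := by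
      funext i
      have h1 := congrFun (hcν.symm.trans hdeg1) i
      have h2 := congrFun (hcν'.symm.trans hdeg2) i
      simp only [Pi.add_apply, Pi.sub_apply] at h1 h2
      omega
    have := Λ.fact_eq (p := Λ.comp p ν) (m := Λ.deg p) (n := Λ.deg ν) hcν
      hr1 rfl rfl rfl hr1' rfl hdν (by rw [hxx])
    exact this.2

/-! ### Indicator functions and the span argument -/

section SpanArg

variable (R : Type) [CommRing R]

noncomputable def chiInd (Λ : KGraph k) (R : Type) [CommRing R]
    (W : Set (Λ.BoundaryPath × (Fin k → ℤ) × Λ.BoundaryPath)) : Λ.bpSpace → R :=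
  Set.indicator (Subtype.val ⁻¹' W) fun _ => (1 : R)

lemma chiInd_inter (Λ : KGraph k)
    (W V : Set (Λ.BoundaryPath × (Fin k → ℤ) × Λ.BoundaryPath)) :
    chiInd Λ R (W ∩ V) = chiInd Λ R W * chiInd Λ R V := by
  classical
  funext g
  by_cases hW : (g : Λ.BoundaryPath × (Fin k → ℤ) × Λ.BoundaryPath) ∈ W <;>
    by_cases hV : (g : Λ.BoundaryPath × (Fin k → ℤ) × Λ.BoundaryPath) ∈ V <;>
    simp [chiInd, Set.indicator_apply, Set.mem_preimage, Set.mem_inter_iff, hW, hV]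

lemma chiInd_union (Λ : KGraph k)
    (W V : Set (Λ.BoundaryPath × (Fin k → ℤ) × Λ.BoundaryPath)) :
    chiInd Λ R (W ∪ V) = chiInd Λ R W + chiInd Λ R V - chiInd Λ R (W ∩ V) := by
  classical
  funext g
  by_cases hW : (g : Λ.BoundaryPath × (Fin k → ℤ) × Λ.BoundaryPath) ∈ W <;>
    by_cases hV : (g : Λ.BoundaryPath × (Fin k → ℤ) × Λ.BoundaryPath) ∈ V <;>
    simp [chiInd, Set.indicator_apply, Set.mem_preimage, Set.mem_inter_iff,
      Set.mem_union, hW, hV]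

lemma chiInd_diff (Λ : KGraph k)
    {W V : Set (Λ.BoundaryPath × (Fin k → ℤ) × Λ.BoundaryPath)} (h : V ⊆ W) :
    chiInd Λ R (W \ V) = chiInd Λ R W - chiInd Λ R V := by
  classical
  funext g
  by_cases hV : (g : Λ.BoundaryPath × (Fin k → ℤ) × Λ.BoundaryPath) ∈ V
  · have hW := h hV
    simp [chiInd, Set.indicator_apply, Set.mem_preimage, Set.mem_diff, hW, hV]
  · by_cases hW : (g : Λ.BoundaryPath × (Fin k → ℤ) × Λ.BoundaryPath) ∈ W <;>
      simp [chiInd, Set.indicator_apply, Set.mem_preimage, Set.mem_diff, hW, hV]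

lemma chiInd_empty (Λ : KGraph k) : chiInd Λ R (∅ : Set _) = 0 := by
  funext g; simp [chiInd]

lemma chiInd_biUnion (Λ : KGraph k) {ι : Type} (F : Finset ι)
    (C : ι → Set (Λ.BoundaryPath × (Fin k → ℤ) × Λ.BoundaryPath))
    (hd : ∀ ν ∈ F, ∀ ν' ∈ F, ν ≠ ν' → Disjoint (C ν) (C ν')) :
    chiInd Λ R (⋃ ν ∈ F, C ν) = ∑ ν ∈ F, chiInd Λ R (C ν) := by
  classical
  funext g
  rw [Finset.sum_apply]
  by_cases hg : ∃ ν ∈ F, (g : Λ.BoundaryPath × (Fin k → ℤ) × Λ.BoundaryPath) ∈ C ν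
  · obtain ⟨ν₀, hν₀F, hν₀⟩ := hg
    have h1 : chiInd Λ R (⋃ ν ∈ F, C ν) g = 1 := by
      simp only [chiInd, Set.indicator_apply, Set.mem_preimage, Set.mem_iUnion₂]
      rw [if_pos ⟨ν₀, hν₀F, hν₀⟩]
    rw [h1, Finset.sum_eq_single_of_mem ν₀ hν₀F]
    · simp [chiInd, Set.indicator_apply, Set.mem_preimage, hν₀]
    · intro b hb hbne
      have : (g : Λ.BoundaryPath × (Fin k → ℤ) × Λ.BoundaryPath) ∉ C b :=
        fun hmem => (Set.disjoint_left.mp (hd b hb ν₀ hν₀F hbne) hmem) hν₀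
      simp [chiInd, Set.indicator_apply, Set.mem_preimage, this]
  · push_neg at hg
    have h1 : chiInd Λ R (⋃ ν ∈ F, C ν) g = 0 := by
      simp only [chiInd, Set.indicator_apply, Set.mem_preimage, Set.mem_iUnion₂]
      rw [if_neg]
      rintro ⟨ν, hν, hmem⟩
      exact hg ν hν hmem
    rw [h1]
    exact (Finset.sum_eq_zero fun ν hν => by
      simp [chiInd, Set.indicator_apply, Set.mem_preimage, hg ν hν]).symm

end SpanArg

end KGraph

/-- the indicator function of a finite union of basic compact open
bisections lies in the `R`-span of indicator functions of basic sets. -/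
theorem indicator_union_mem_span {k : ℕ} (hk : 0 < k) (Λ : KGraph k)
    (hΛ : Λ.FinitelyAligned) (R : Type) [CommRing R]
    (n : ℕ) (lam mu : Fin n → Λ.Path) (G : Fin n → Set Λ.Path)
    (hsrc : ∀ i, Λ.src (lam i) = Λ.src (mu i))
    (hG : ∀ i, ∀ ν ∈ G i, Λ.rng ν = Λ.src (lam i))
    (hGfin : ∀ i, (G i).Finite) :
    Set.indicator
        (Subtype.val ⁻¹' ⋃ i, Λ.ZPD (lam i) (mu i) (G i) : Set Λ.bpSpace)
        (fun _ => (1 : R)) ∈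
      Submodule.span R {f : Λ.bpSpace → R | ∃ (p q : Λ.Path) (G₀ : Set Λ.Path),
        Λ.src p = Λ.src q ∧ (∀ ν ∈ G₀, Λ.rng ν = Λ.src p) ∧ G₀.Finite ∧
        f = Set.indicator (Subtype.val ⁻¹' Λ.ZPD p q G₀) fun _ => (1 : R)} := by
  classical
  set T : Set (Λ.bpSpace → R) :=
    {f | ∃ p q : Λ.Path, Λ.src p = Λ.src q ∧ f = KGraph.chiInd Λ R (Λ.ZP p q)} with hT
  -- every generator of `T` is a generator of the target span
  have hTsub : T ⊆ (Submodule.span R {f : Λ.bpSpace → R |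
      ∃ (p q : Λ.Path) (G₀ : Set Λ.Path),
        Λ.src p = Λ.src q ∧ (∀ ν ∈ G₀, Λ.rng ν = Λ.src p) ∧ G₀.Finite ∧
        f = Set.indicator (Subtype.val ⁻¹' Λ.ZPD p q G₀) fun _ => (1 : R)} :
      Set (Λ.bpSpace → R)) := by
    rintro f ⟨p, q, hpq, rfl⟩
    apply Submodule.subset_span
    refine ⟨p, q, ∅, hpq, by simp, Set.finite_empty, ?_⟩
    have : Λ.ZPD p q ∅ = Λ.ZP p q := by
      simp [KGraph.ZPD]
    rw [this]
    rfl
  -- multiplicative closure of `span R T`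
  have hmulT : ∀ f ∈ T, ∀ g ∈ T, f * g ∈ Submodule.span R T := by
    rintro f ⟨p, q, hpq, rfl⟩ g ⟨a, b, hab, rfl⟩
    obtain ⟨F, hFr, hFeq, hFd⟩ := Λ.ZP_inter_eq hΛ p q a b hpq hab
    have key : KGraph.chiInd Λ R (Λ.ZP p q) * KGraph.chiInd Λ R (Λ.ZP a b) =
        ∑ ν ∈ F, KGraph.chiInd Λ R (Λ.ZP (Λ.comp p ν) (Λ.comp q ν)) := by
      rw [← KGraph.chiInd_inter, hFeq, KGraph.chiInd_biUnion R Λ F _ hFd]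
    rw [key]
    refine Submodule.sum_mem _ fun ν hν => Submodule.subset_span ?_
    have h1 : Λ.src p = Λ.rng ν := hFr ν hν
    have h2 : Λ.src q = Λ.rng ν := hpq ▸ h1
    exact ⟨Λ.comp p ν, Λ.comp q ν, by
      rw [Λ.src_comp p ν h1, Λ.src_comp q ν h2], rfl⟩
  have hmul : ∀ f g : Λ.bpSpace → R, f ∈ Submodule.span R T →
      g ∈ Submodule.span R T → f * g ∈ Submodule.span R T := by
    intro f g hf hg
    induction hf using Submodule.span_induction with
    | mem x hx =>
      induction hg using Submodule.span_induction with
      | mem y hy => exact hmulT x hx y hy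
      | zero => rw [mul_zero]; exact Submodule.zero_mem _
      | add y z _ _ hy hz => rw [mul_add]; exact Submodule.add_mem _ hy hz
      | smul c y _ hy => rw [mul_smul_comm]; exact Submodule.smul_mem _ c hy
    | zero => rw [zero_mul]; exact Submodule.zero_mem _
    | add y z _ _ hy hz => rw [add_mul]; exact Submodule.add_mem _ hy hz
    | smul c y _ hy => rw [smul_mul_assoc]; exact Submodule.smul_mem _ c hy
  have hunion : ∀ W V : Set (Λ.BoundaryPath × (Fin k → ℤ) × Λ.BoundaryPath),
      KGraph.chiInd Λ R W ∈ Submodule.span R T →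
      KGraph.chiInd Λ R V ∈ Submodule.span R T →
      KGraph.chiInd Λ R (W ∪ V) ∈ Submodule.span R T := by
    intro W V hW hV
    rw [KGraph.chiInd_union, KGraph.chiInd_inter]
    exact Submodule.sub_mem _ (Submodule.add_mem _ hW hV) (hmul _ _ hW hV)
  -- basic ZPD indicators lie in `span R T`
  have hZPD : ∀ (p q : Λ.Path) (G₀ : Set Λ.Path), Λ.src p = Λ.src q →
      (∀ ν ∈ G₀, Λ.rng ν = Λ.src p) → G₀.Finite →
      KGraph.chiInd Λ R (Λ.ZPD p q G₀) ∈ Submodule.span R T := by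
    intro p q G₀ hpq hGr hGf
    have hFinsetU : ∀ F : Finset Λ.Path, (∀ ν ∈ F, Λ.rng ν = Λ.src p) →
        KGraph.chiInd Λ R (⋃ ν ∈ F, Λ.ZP (Λ.comp p ν) (Λ.comp q ν)) ∈
          Submodule.span R T := by
      intro F
      induction F using Finset.induction_on with
      | empty =>
        intro _
        rw [show (⋃ ν ∈ (∅ : Finset Λ.Path), Λ.ZP (Λ.comp p ν) (Λ.comp q ν)) = ∅ by
          simp, KGraph.chiInd_empty]
        exact Submodule.zero_mem _
      | @insert a s hanotin ih =>
        intro hins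
        rw [show (⋃ ν ∈ insert a s, Λ.ZP (Λ.comp p ν) (Λ.comp q ν)) =
            Λ.ZP (Λ.comp p a) (Λ.comp q a) ∪ ⋃ ν ∈ s, Λ.ZP (Λ.comp p ν) (Λ.comp q ν) by
          simp [Set.biUnion_insert]]
        refine hunion _ _ ?_ (ih fun ν hν => hins ν (Finset.mem_insert_of_mem hν))
        have h1 : Λ.src p = Λ.rng a := (hins a (Finset.mem_insert_self a s)).symm
        have h2 : Λ.src q = Λ.rng a := hpq ▸ h1
        exact Submodule.subset_span ⟨Λ.comp p a, Λ.comp q a, by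
          rw [Λ.src_comp p a h1, Λ.src_comp q a h2], rfl⟩
    have hUnion : KGraph.chiInd Λ R (⋃ ν ∈ G₀, Λ.ZP (Λ.comp p ν) (Λ.comp q ν)) ∈
        Submodule.span R T := by
      have hcoe : (⋃ ν ∈ hGf.toFinset, Λ.ZP (Λ.comp p ν) (Λ.comp q ν)) =
          ⋃ ν ∈ G₀, Λ.ZP (Λ.comp p ν) (Λ.comp q ν) := by
        ext g; simp [Set.Finite.mem_toFinset]
      rw [← hcoe]
      exact hFinsetU hGf.toFinset fun ν hν =>
        hGr ν ((Set.Finite.mem_toFinset hGf).mp hν)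
    have hsub : (⋃ ν ∈ G₀, Λ.ZP (Λ.comp p ν) (Λ.comp q ν)) ⊆ Λ.ZP p q :=
      Set.iUnion₂_subset fun ν hν => Λ.ZP_comp_subset hpq ((hGr ν hν).symm)
    have hdiff : KGraph.chiInd Λ R (Λ.ZPD p q G₀) =
        KGraph.chiInd Λ R (Λ.ZP p q) -
          KGraph.chiInd Λ R (⋃ ν ∈ G₀, Λ.ZP (Λ.comp p ν) (Λ.comp q ν)) := by
      rw [← KGraph.chiInd_diff R Λ hsub]
      rfl
    rw [hdiff]
    refine Submodule.sub_mem _ (Submodule.subset_span ⟨p, q, hpq, rfl⟩) hUnion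
  -- finite unions of ZPD sets
  have hfinal : ∀ s : Finset (Fin n),
      KGraph.chiInd Λ R (⋃ i ∈ s, Λ.ZPD (lam i) (mu i) (G i)) ∈
        Submodule.span R T := by
    intro s
    induction s using Finset.induction_on with
    | empty =>
      rw [show (⋃ i ∈ (∅ : Finset (Fin n)), Λ.ZPD (lam i) (mu i) (G i)) = ∅ by simp,
        KGraph.chiInd_empty]
      exact Submodule.zero_mem _
    | @insert a s hanotin ih =>
      rw [show (⋃ i ∈ insert a s, Λ.ZPD (lam i) (mu i) (G i)) =
          Λ.ZPD (lam a) (mu a) (G a) ∪ ⋃ i ∈ s, Λ.ZPD (lam i) (mu i) (G i) by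
        simp [Set.biUnion_insert]]
      exact hunion _ _ (hZPD (lam a) (mu a) (G a) (hsrc a) (hG a) (hGfin a)) ih
  have hu := hfinal Finset.univ
  rw [show (⋃ i ∈ (Finset.univ : Finset (Fin n)), Λ.ZPD (lam i) (mu i) (G i)) =
      ⋃ i, Λ.ZPD (lam i) (mu i) (G i) by simp] at hu
  have hle := Submodule.span_le.mpr hTsub
  exact hle hu
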